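/- If a monoid morphism φ: (Σ₂⊥)* → M recognizes a relation R viewed as a language over Σ₂⊥, then the induced synchronous algebra morphism φ̂: Sync(Σ) → ↑M recognizes R. -/

import Mathlib

/-- The paired alphabet `Σ₂⊥ = (Σ×Σ) ⊕ (Σ×{⊥}) ⊕ ({⊥}×Σ)`. -/
def PL (α : Type) : Type := (α × α) ⊕ α ⊕ α

/-- Well-formed words over `Σ₂⊥`. -/
def WF {α : Type} (l : List (PL α)) : Prop :=
  ∃ (w : List (α × α)) (s : List α),
    l = w.map Sum.inl ++ s.map (fun a => Sum.inr (Sum.inl a)) ∨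
    l = w.map Sum.inl ++ s.map (fun a => Sum.inr (Sum.inr a))

/-- Decode a word over `Σ₂⊥` into the pair of words it represents. -/
def decodeW {α : Type} (l : List (PL α)) : List α × List α :=
  (l.filterMap (fun x => match x with
      | Sum.inl p => some p.1
      | Sum.inr (Sum.inl a) => some a
      | Sum.inr (Sum.inr _) => none),
   l.filterMap (fun x => match x with
      | Sum.inl p => some p.2
      | Sum.inr (Sum.inl _) => none
      | Sum.inr (Sum.inr a) => some a))

/-- The five types of synchronous words. -/
inductive STy | ll | lllb | lb | llbl | bl
deriving DecidableEq

/-- Synchronous words over `α`, organized by their five types. -/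
inductive SyncW (α : Type) : Type
  | wll : List (α × α) → SyncW α
  | wlllb : List (α × α) → List α → SyncW α
  | wlb : List α → SyncW α
  | wllbl : List (α × α) → List α → SyncW α
  | wbl : List α → SyncW α

namespace SyncW

variable {α : Type}

/-- The type of a synchronous word. -/
def ty : SyncW α → STy
  | wll _ => .ll | wlllb _ _ => .lllb | wlb _ => .lb | wllbl _ _ => .llbl | wbl _ => .bl

/-- Decoding into the represented pair of words. -/
def decode : SyncW α → List α × List α
  | wll w => (w.map Prod.fst, w.map Prod.snd)
  | wlllb w s => (w.map Prod.fst ++ s, w.map Prod.snd)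
  | wlb s => (s, [])
  | wllbl w s => (w.map Prod.fst, w.map Prod.snd ++ s)
  | wbl s => ([], s)

/-- Encoding a synchronous word as a word over `Σ₂⊥`. -/
def encode : SyncW α → List (PL α)
  | wll w => w.map Sum.inl
  | wlllb w s => w.map Sum.inl ++ s.map (fun a => Sum.inr (Sum.inl a))
  | wlb s => s.map (fun a => Sum.inr (Sum.inl a))
  | wllbl w s => w.map Sum.inl ++ s.map (fun a => Sum.inr (Sum.inr a))
  | wbl s => s.map (fun a => Sum.inr (Sum.inr a))

end SyncW

/-- The closed subset of `Sync(α)` induced by a relation. -/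
def projS {α : Type} (R : Set (List α × List α)) : Set (SyncW α) :=
  { x | x.decode ∈ R }

lemma filterMap_comp_some {α β γ : Type} (f : β → Option γ) (g : α → β)
    (h : α → γ) (H : ∀ a, f (g a) = some (h a)) (l : List α) :
    l.filterMap (f ∘ g) = l.map h := by
  induction l with
  | nil => rfl
  | cons a t ih => simp [List.filterMap_cons, Function.comp, H, ih]

lemma filterMap_comp_none {α β γ : Type} (f : β → Option γ) (g : α → β)
    (H : ∀ a, f (g a) = none) (l : List α) :
    l.filterMap (f ∘ g) = [] := by
  induction l with
  | nil => rfl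
  | cons a t ih => simp [List.filterMap_cons, Function.comp, H, ih]

private abbrev pf1 {α : Type} : PL α → Option α := fun x =>
  match x with
  | Sum.inl p => some p.1
  | Sum.inr (Sum.inl a) => some a
  | Sum.inr (Sum.inr _) => none

private abbrev pf2 {α : Type} : PL α → Option α := fun x =>
  match x with
  | Sum.inl p => some p.2
  | Sum.inr (Sum.inl _) => none
  | Sum.inr (Sum.inr a) => some a

lemma fm1 {α : Type} (l : List (α × α)) :
    List.filterMap (pf1 ∘ (Sum.inl : α × α → PL α)) l = l.map Prod.fst :=
  filterMap_comp_some _ _ _ (fun _ => rfl) l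

lemma fm2 {α : Type} (l : List (α × α)) :
    List.filterMap (pf2 ∘ (Sum.inl : α × α → PL α)) l = l.map Prod.snd :=
  filterMap_comp_some _ _ _ (fun _ => rfl) l

lemma fm3 {α : Type} (l : List α) :
    List.filterMap (pf1 ∘ (fun a : α => (Sum.inr (Sum.inl a) : PL α))) l = l := by
  exact (filterMap_comp_some pf1 _ id (fun _ => rfl) l).trans (List.map_id l)

lemma fm4 {α : Type} (l : List α) :
    List.filterMap (pf2 ∘ (fun a : α => (Sum.inr (Sum.inl a) : PL α))) l = [] :=
  filterMap_comp_none _ _ (fun _ => rfl) l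

lemma fm5 {α : Type} (l : List α) :
    List.filterMap (pf1 ∘ (fun a : α => (Sum.inr (Sum.inr a) : PL α))) l = [] :=
  filterMap_comp_none _ _ (fun _ => rfl) l

lemma fm6 {α : Type} (l : List α) :
    List.filterMap (pf2 ∘ (fun a : α => (Sum.inr (Sum.inr a) : PL α))) l = l := by
  exact (filterMap_comp_some pf2 _ id (fun _ => rfl) l).trans (List.map_id l)

/-- If a monoid morphism `φ : (Σ₂⊥)* → M` recognizes the
relation `R` viewed as a language over `Σ₂⊥` (via `Acc ⊆ M`), then the induced
synchronous algebra morphism `φ̂ : Sync(Σ) → ↑M`, `x ↦ (φ(encode x), ty x)`,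
recognizes `R` via the closed subset `Acc' = Acc × T` of the induced algebra. -/
theorem induced_morphism_recognizes (α : Type) (M : Type) [Monoid M]
    (φ : FreeMonoid (PL α) →* M) (Acc : Set M) (R : Set (List α × List α))
    (hrec : ∀ l : List (PL α), WF l →
      (decodeW l ∈ R ↔ φ (FreeMonoid.ofList l) ∈ Acc)) :
    projS R =
      (fun x : SyncW α => (φ (FreeMonoid.ofList x.encode), x.ty))
        ⁻¹' (Acc ×ˢ (Set.univ : Set STy)) := by
  ext x
  have hwf : WF x.encode := by
    cases x with
    | wll w => exact ⟨w, [], Or.inl (List.append_nil _).symm⟩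
    | wlllb w s => exact ⟨w, s, Or.inl rfl⟩
    | wlb s => exact ⟨[], s, Or.inl rfl⟩
    | wllbl w s => exact ⟨w, s, Or.inr rfl⟩
    | wbl s => exact ⟨[], s, Or.inr rfl⟩
  have hdec : decodeW x.encode = x.decode := by
    cases x <;>
      simp only [SyncW.encode, SyncW.decode, decodeW, List.filterMap_append,
        List.filterMap_map, Prod.mk.injEq, List.append_nil]
    case wlllb | wllbl =>
      erw [List.filterMap_append, List.filterMap_append, List.filterMap_map,
        List.filterMap_map, List.filterMap_map, List.filterMap_map]
      simp [fm1, fm2, fm3, fm4, fm5, fm6]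
    all_goals
      erw [List.filterMap_map, List.filterMap_map]
      simp [fm1, fm2, fm3, fm4, fm5, fm6]
  simp only [projS, Set.mem_setOf_eq, Set.mem_preimage, Set.mem_prod,
    Set.mem_univ, and_true]
  rw [← hdec, hrec _ hwf]
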